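/- If a binary character χ on an n-element set X divides X into blocks of sizes r and n−r with 1 ≤ r ≤ n−1, then the probability that a uniformly random binary character on X is compatible with χ equals (1/2)^(r−1) + (1/2)^(n−r−1) − (1/2)^(n−2). -/

import Mathlib

open Finset
open scoped Classical

/-- The set of taxa whose state differs from that of the reference taxon `x0`. -/
noncomputable def Aset {n : ℕ} (x0 : Fin n) (χ : Fin n → Bool) : Finset (Fin n) :=
  Finset.univ.filter fun x => χ x ≠ χ x0

/-- Two binary characters are compatible if their `Aset`s are disjoint or nested. -/
def Compat {n : ℕ} (x0 : Fin n) (χ₁ χ₂ : Fin n → Bool) : Prop :=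
  Disjoint (Aset x0 χ₁) (Aset x0 χ₂) ∨ Aset x0 χ₁ ⊆ Aset x0 χ₂ ∨ Aset x0 χ₂ ⊆ Aset x0 χ₁

lemma mem_Aset {n : ℕ} (x0 : Fin n) (χ : Fin n → Bool) (x : Fin n) :
    x ∈ Aset x0 χ ↔ χ x ≠ χ x0 := by simp [Aset]

lemma x0_not_mem_Aset {n : ℕ} (x0 : Fin n) (χ : Fin n → Bool) : x0 ∉ Aset x0 χ := by
  simp [mem_Aset]

lemma Aset_subset_erase {n : ℕ} (x0 : Fin n) (χ : Fin n → Bool) :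
    Aset x0 χ ⊆ Finset.univ.erase x0 := by
  intro x hx
  rcases eq_or_ne x x0 with rfl | h
  · exact absurd hx (x0_not_mem_Aset _ _)
  · simp [h]

lemma Aset_mk {n : ℕ} (x0 : Fin n) (b : Bool) (B : Finset (Fin n)) (h : x0 ∉ B) :
    Aset x0 (fun x => xor (decide (x ∈ B)) b) = B := by
  ext x
  simp only [mem_Aset]
  have h0 : decide (x0 ∈ B) = false := by simp [h]
  rw [h0]
  by_cases hx : x ∈ B <;> simp [hx]

/-- Counting the good subsets `B` of `univ.erase x0`. -/
lemma countB {n : ℕ} (x0 : Fin n) (A : Finset (Fin n)) (hx0 : x0 ∉ A) (hA : A.Nonempty) :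
    (((Finset.univ.erase x0).powerset.filter
      (fun B => Disjoint A B ∨ A ⊆ B ∨ B ⊆ A)).card : ℕ) + 2
      = 2 ^ ((Finset.univ.erase x0 \ A).card + 1) + 2 ^ A.card := by
  classical
  set S : Finset (Fin n) := Finset.univ.erase x0 with hS
  have hAS : A ⊆ S := by
    intro x hx
    rcases eq_or_ne x x0 with rfl | h
    · exact absurd hx hx0
    · simp [hS, h]
  set C : Finset (Fin n) := S \ A with hC
  set S1 : Finset (Finset (Fin n)) := C.powerset with hS1
  set S2 : Finset (Finset (Fin n)) := A.powerset with hS2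
  set S3 : Finset (Finset (Fin n)) := C.powerset.image (· ∪ A) with hS3
  have hfilter : S.powerset.filter (fun B => Disjoint A B ∨ A ⊆ B ∨ B ⊆ A)
      = S1 ∪ S2 ∪ S3 := by
    ext B
    simp only [mem_filter, mem_powerset, mem_union, hS1, hS2, hS3, mem_image]
    constructor
    · rintro ⟨hBS, hd | hAB | hBA⟩
      · exact Or.inl (Or.inl (by
          intro x hx
          simp only [hC, mem_sdiff]
          exact ⟨hBS hx, fun hxA => Finset.disjoint_left.1 hd hxA hx⟩))
      · refine Or.inr ⟨B \ A, ?_, ?_⟩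
        · intro x hx
          simp only [hC, mem_sdiff] at hx ⊢
          exact ⟨hBS hx.1, hx.2⟩
        · exact Finset.sdiff_union_of_subset hAB
      · exact Or.inl (Or.inr hBA)
    · rintro ((hBC | hBA) | ⟨D, hD, rfl⟩)
      · refine ⟨hBC.trans (Finset.sdiff_subset), Or.inl ?_⟩
        exact Finset.disjoint_left.2 fun x hxA hxB => (mem_sdiff.1 (hBC hxB)).2 hxA
      · exact ⟨hBA.trans hAS, Or.inr (Or.inr hBA)⟩
      · exact ⟨Finset.union_subset (hD.trans Finset.sdiff_subset) hAS,
          Or.inr (Or.inl Finset.subset_union_right)⟩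
  have hdisjCA : ∀ D ⊆ C, Disjoint D A := fun D hD =>
    Finset.disjoint_left.2 fun x hxD hxA => (mem_sdiff.1 (hD hxD)).2 hxA
  have card1 : S1.card = 2 ^ C.card := by simp [hS1, Finset.card_powerset]
  have card2 : S2.card = 2 ^ A.card := by simp [hS2, Finset.card_powerset]
  have card3 : S3.card = 2 ^ C.card := by
    rw [hS3, Finset.card_image_of_injOn, Finset.card_powerset]
    intro D hD E hE hDE
    simp only [mem_coe, mem_powerset] at hD hE
    have h1 : (D ∪ A) \ A = D := Finset.union_sdiff_cancel_right (hdisjCA D hD)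
    have h2 : (E ∪ A) \ A = E := Finset.union_sdiff_cancel_right (hdisjCA E hE)
    rw [← h1, ← h2]
    exact congrArg (fun X => X \ A) hDE
  have hS12 : S1 ∩ S2 = {∅} := by
    ext B
    simp only [mem_inter, mem_singleton, hS1, hS2, mem_powerset]
    constructor
    · rintro ⟨h1, h2⟩
      have hdj : Disjoint B A := hdisjCA B h1
      exact Finset.subset_empty.1 (by
        intro x hx
        exact absurd hx (Finset.disjoint_left.1 hdj · (h2 hx)))
    · rintro rfl; simp
  have hS13 : S1 ∩ S3 = ∅ := by
    rw [Finset.eq_empty_iff_forall_notMem]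
    intro B hB
    rw [mem_inter] at hB
    obtain ⟨h1, h3⟩ := hB
    simp only [hS3, mem_image] at h3
    obtain ⟨D, hD, rfl⟩ := h3
    simp only [hS1, mem_powerset] at h1
    obtain ⟨a, ha⟩ := hA
    have haDA : a ∈ D ∪ A := Finset.mem_union_right _ ha
    exact (mem_sdiff.1 (h1 haDA)).2 ha
  have hS23 : S2 ∩ S3 = {A} := by
    ext B
    simp only [mem_inter, mem_singleton, hS2, hS3, mem_powerset, mem_image]
    constructor
    · rintro ⟨h2, D, hD, rfl⟩
      exact Finset.Subset.antisymm h2 Finset.subset_union_right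
    · rintro rfl
      exact ⟨Finset.Subset.refl _, ∅, by simp, by simp⟩
  have key12 : (S1 ∪ S2).card + 1 = 2 ^ C.card + 2 ^ A.card := by
    have := Finset.card_union_add_card_inter S1 S2
    rw [hS12] at this
    simpa [card1, card2] using this
  have key : ((S1 ∪ S2) ∪ S3).card + 1 = (S1 ∪ S2).card + 2 ^ C.card := by
    have := Finset.card_union_add_card_inter (S1 ∪ S2) S3
    have hint : (S1 ∪ S2) ∩ S3 = {A} := by
      rw [Finset.union_inter_distrib_right, hS13, hS23]
      simp
    rw [hint] at this
    simpa [card3] using this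
  rw [hfilter]
  omega

/-- Counting the compatible characters `ψ`. -/
lemma countPsi {n : ℕ} (x0 : Fin n) (χ : Fin n → Bool)
    (hA : (Aset x0 χ).Nonempty) :
    (Finset.univ.filter fun ψ : Fin n → Bool => Compat x0 χ ψ).card + 4
      = 2 ^ ((Finset.univ.erase x0 \ Aset x0 χ).card + 2) + 2 ^ ((Aset x0 χ).card + 1) := by
  classical
  set A := Aset x0 χ with hAdef
  have hx0 : x0 ∉ A := x0_not_mem_Aset _ _
  set P : Finset (Fin n) → Prop := fun B => Disjoint A B ∨ A ⊆ B ∨ B ⊆ A with hP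
  have hbij : (Finset.univ.filter fun ψ : Fin n → Bool => Compat x0 χ ψ).card
      = ((Finset.univ : Finset Bool) ×ˢ
          ((Finset.univ.erase x0).powerset.filter P)).card := by
    refine Finset.card_bij' (fun ψ _ => (ψ x0, Aset x0 ψ))
      (fun p _ => fun x => xor (decide (x ∈ p.2)) p.1) ?_ ?_ ?_ ?_
    · intro ψ hψ
      simp only [Finset.mem_product, Finset.mem_univ, true_and, mem_filter, mem_powerset]
      refine ⟨Aset_subset_erase x0 ψ, ?_⟩
      simpa [Compat, hP, hAdef] using (Finset.mem_filter.1 hψ).2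
    · intro p hp
      simp only [Finset.mem_product, Finset.mem_univ, true_and, mem_filter,
        mem_powerset] at hp
      have hx0p : x0 ∉ p.2 := fun h => (Finset.mem_erase.1 (hp.1 h)).1 rfl
      rw [mem_filter]; simp only [Finset.mem_univ, true_and, Compat]
      rw [← hAdef, Aset_mk x0 p.1 p.2 hx0p]
      exact hp.2
    · intro ψ hψ
      funext x
      dsimp only
      by_cases h : x ∈ Aset x0 ψ
      · have h' : ψ x ≠ ψ x0 := (mem_Aset _ _ _).1 h
        rw [show decide (x ∈ Aset x0 ψ) = true from by simp [h]]
        cases hb : ψ x0 <;> cases hc : ψ x <;> simp_all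
      · have h' : ψ x = ψ x0 := by
          by_contra hcon
          exact h ((mem_Aset _ _ _).2 hcon)
        simp [h, h']
    · intro p hp
      simp only [Finset.mem_product, Finset.mem_univ, true_and, mem_filter,
        mem_powerset] at hp
      have hx0p : x0 ∉ p.2 := fun h => (Finset.mem_erase.1 (hp.1 h)).1 rfl
      obtain ⟨b, B⟩ := p
      simp only at hx0p ⊢
      rw [Aset_mk x0 b B hx0p]
      simp [hx0p]
  rw [hbij, Finset.card_product]
  have hB := countB x0 A hx0 hA
  have hB' : (((Finset.univ.erase x0).powerset.filter P).card : ℕ) + 2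
      = 2 ^ ((Finset.univ.erase x0 \ A).card + 1) + 2 ^ A.card := by
    convert hB using 4
  have h1 : 2 ^ ((Finset.univ.erase x0 \ A).card + 2)
      = 2 * 2 ^ ((Finset.univ.erase x0 \ A).card + 1) := by ring
  have h2 : 2 ^ (A.card + 1) = 2 * 2 ^ A.card := by ring
  simp only [Finset.card_univ, Fintype.card_bool]
  omega

lemma realcalc (k m : ℕ) :
    ((2:ℝ) ^ (m + 2) + 2 ^ (k + 2) - 4) / 2 ^ (k + m + 2)
      = (1 / 2 : ℝ) ^ k + (1 / 2 : ℝ) ^ m - (1 / 2 : ℝ) ^ (k + m) := by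
  have hk : (2:ℝ) ^ k ≠ 0 := by positivity
  have hm : (2:ℝ) ^ m ≠ 0 := by positivity
  rw [pow_add ((2:ℝ)) (k + m) 2, pow_add ((2:ℝ)) k m, pow_add ((2:ℝ)) m 2,
    pow_add ((2:ℝ)) k 2, pow_add ((1/2:ℝ)) k m]
  rw [div_pow, div_pow, one_pow, one_pow]
  field_simp
  ring

/-- If a binary character divides the n-set into blocks of sizes r and n-r (1 ≤ r ≤ n-1),
the probability that a uniformly random binary character is compatible with it equals
(1/2)^(r-1) + (1/2)^(n-r-1) - (1/2)^(n-2). -/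
theorem stmt1 (n r : ℕ) (hn : 2 ≤ n) (hr : 1 ≤ r) (hr' : r ≤ n - 1)
    (x0 : Fin n) (χ : Fin n → Bool)
    (hχ : (Finset.univ.filter fun x => χ x = true).card = r) :
    ((Finset.univ.filter fun ψ : Fin n → Bool => Compat x0 χ ψ).card : ℝ) / 2 ^ n
      = (1 / 2 : ℝ) ^ (r - 1) + (1 / 2 : ℝ) ^ (n - r - 1) - (1 / 2 : ℝ) ^ (n - 2) := by
  classical
  obtain ⟨k, rfl⟩ : ∃ k, r = k + 1 := ⟨r - 1, by omega⟩
  obtain ⟨m, hnm⟩ : ∃ m, n = k + m + 2 := ⟨n - k - 2, by omega⟩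
  have hcardS : (Finset.univ.erase x0).card = n - 1 := by
    simp [Finset.card_erase_of_mem, Fintype.card_fin]
  have hcardA : (Aset x0 χ).card = k + 1 ∨ (Aset x0 χ).card = m + 1 := by
    cases hb : χ x0
    · left
      rw [← hχ]
      congr 1
      ext x
      simp [Aset, hb]
    · right
      have htot := Finset.card_filter_add_card_filter_not
        (s := (Finset.univ : Finset (Fin n))) (p := fun x => χ x = true)
      have hA' : Aset x0 χ = Finset.univ.filter fun x => ¬ (χ x = true) := by
        ext x
        simp [Aset, hb]
      rw [hA']
      simp only [Finset.card_univ, Fintype.card_fin] at htot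
      omega
  have hsub : Aset x0 χ ⊆ Finset.univ.erase x0 := Aset_subset_erase x0 χ
  have hAle : (Aset x0 χ).card ≤ n - 1 := hcardS ▸ Finset.card_le_card hsub
  have hAne : (Aset x0 χ).Nonempty := by
    rw [← Finset.card_pos]
    omega
  have hcount := countPsi x0 χ hAne
  have hsd : (Finset.univ.erase x0 \ Aset x0 χ).card = n - 1 - (Aset x0 χ).card := by
    rw [Finset.card_sdiff_of_subset hsub, hcardS]
  rw [hsd] at hcount
  have he1 : (k + 1 : ℕ) - 1 = k := by omega
  have he2 : n - (k + 1) - 1 = m := by omega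
  have he3 : n - 2 = k + m := by omega
  rw [he1, he2, he3]
  set N := (Finset.univ.filter fun ψ : Fin n → Bool => Compat x0 χ ψ).card with hN
  rcases hcardA with hc | hc
  · rw [hc] at hcount
    have hc2 : n - 1 - (k + 1) = m := by omega
    rw [hc2] at hcount
    have h4 : (N : ℝ) + 4 = 2 ^ (m + 2) + 2 ^ (k + 2) := by exact_mod_cast hcount
    have hNr : (N : ℝ) = 2 ^ (m + 2) + 2 ^ (k + 2) - 4 := by linarith
    rw [hNr, hnm]
    exact realcalc k m
  · rw [hc] at hcount
    have hc2 : n - 1 - (m + 1) = k := by omega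
    rw [hc2] at hcount
    have h4 : (N : ℝ) + 4 = 2 ^ (k + 2) + 2 ^ (m + 2) := by exact_mod_cast hcount
    have hNr : (N : ℝ) = 2 ^ (k + 2) + 2 ^ (m + 2) - 4 := by linarith
    rw [hNr, hnm]
    have h := realcalc m k
    rw [show m + k + 2 = k + m + 2 by omega, show m + k = k + m by omega] at h
    rw [h]
    ring
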